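/- Let F be a function assigning a rational number to each tuple (k_1,...,k_n) of nonnegative integers with k_1 + ... + k_n = n + 1 (for n ≥ 1). Suppose F satisfies: (string equation) if some k_j = 0 then F(k_1,...,k_n) = ∑_{i : k_i > 0} F applied to the tuple of length n-1 obtained by deleting the j-th entry and decreasing k_i by 1; (dilaton equation) if some k_j = 1 then F(k_1,...,k_n) = (n+1) · F applied to the tuple of length n-1 obtained by deleting the j-th entry; and (initial condition) F(2) = 1/24 for n = 1. Then F(k_1,...,k_n) = (1/24) · (n+1)! / (k_1! ⋯ k_n!). -/

import Mathlib

open Finset Nat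

private lemma mult_cast (m : ℕ) (f : Fin m → ℕ) :
    (Nat.multinomial univ f : ℚ) = ((∑ i, f i)! : ℚ) / ∏ i, ((f i)! : ℚ) := by
  rw [eq_div_iff (by positivity), mul_comm]
  exact_mod_cast congrArg (Nat.cast : ℕ → ℚ) (Nat.multinomial_spec univ f)

private lemma string_mult (m : ℕ) (f : Fin m → ℕ) (hpos : 0 < ∑ i, f i) :
    ∑ i ∈ univ.filter (fun i => 0 < f i),
        (Nat.multinomial univ (Function.update f i (f i - 1)) : ℚ)
      = Nat.multinomial univ f := by
  have hterm : ∀ i ∈ univ.filter (fun i => 0 < f i),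
      (Nat.multinomial univ (Function.update f i (f i - 1)) : ℚ)
        = (f i) * (((∑ l, f l) - 1)! : ℚ) / ∏ l, ((f l)! : ℚ) := by
    intro i hi
    simp only [mem_filter] at hi
    have hfi := hi.2
    rw [mult_cast]
    have herase := Finset.add_sum_erase univ f (mem_univ i)
    rw [Finset.erase_eq] at herase
    have hsum : ∑ l, Function.update f i (f i - 1) l = (∑ l, f l) - 1 := by
      rw [Finset.sum_update_of_mem (mem_univ i)]
      omega
    rw [hsum]
    have hpe : (fun l => ((Function.update f i (f i - 1) l)! : ℚ))
        = Function.update (fun l => ((f l)! : ℚ)) i (((f i - 1)! : ℚ)) := by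
      funext l
      by_cases h : l = i <;> simp [Function.update, h]
    have hprod : (∏ l, ((Function.update f i (f i - 1) l)! : ℚ))
        = ((f i - 1)! : ℚ) * ∏ l ∈ univ \ {i}, ((f l)! : ℚ) := by
      calc (∏ l, ((Function.update f i (f i - 1) l)! : ℚ))
          = ∏ l, Function.update (fun l => ((f l)! : ℚ)) i (((f i - 1)! : ℚ)) l := by
            rw [hpe]
        _ = _ := Finset.prod_update_of_mem (mem_univ i) _ _
    have hpuniv : (∏ l, ((f l)! : ℚ))
        = ((f i)! : ℚ) * ∏ l ∈ univ \ {i}, ((f l)! : ℚ) := by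
      rw [← Finset.erase_eq]
      exact (Finset.mul_prod_erase univ (fun l => ((f l)! : ℚ)) (mem_univ i)).symm
    rw [hprod, hpuniv]
    have hfac : ((f i : ℚ)) * ((f i - 1)! : ℚ) = ((f i)! : ℚ) := by
      exact_mod_cast congrArg (Nat.cast : ℕ → ℚ) (Nat.mul_factorial_pred hfi.ne')
    rw [div_eq_div_iff (by positivity) (by positivity), ← hfac]
    ring
  rw [Finset.sum_congr rfl hterm, mult_cast, ← Finset.sum_div, ← Finset.sum_mul]
  have hs : ∑ i ∈ univ.filter (fun i => 0 < f i), ((f i : ℚ)) = ((∑ i, f i : ℕ) : ℚ) := by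
    norm_cast
    apply Finset.sum_filter_of_ne
    intro x _ h
    omega
  rw [hs]
  congr 1
  exact_mod_cast congrArg (Nat.cast : ℕ → ℚ) (Nat.mul_factorial_pred hpos.ne')

private lemma mult_zero_erase (m : ℕ) (k : Fin (m + 1) → ℕ) (j : Fin (m + 1))
    (hj : k j = 0) :
    (Nat.multinomial univ k : ℚ) = Nat.multinomial univ (k ∘ j.succAbove) := by
  rw [mult_cast, mult_cast]
  rw [Fin.sum_univ_succAbove k j, Fin.prod_univ_succAbove (fun l => ((k l)! : ℚ)) j, hj]
  simp [Function.comp]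

private lemma mult_one_erase (m : ℕ) (k : Fin (m + 1) → ℕ) (j : Fin (m + 1))
    (hj : k j = 1) :
    (Nat.multinomial univ k : ℚ)
      = (∑ i, k i) * Nat.multinomial univ (k ∘ j.succAbove) := by
  rw [mult_cast, mult_cast]
  rw [Fin.sum_univ_succAbove k j, Fin.prod_univ_succAbove (fun l => ((k l)! : ℚ)) j, hj]
  have h : (1 + ∑ i, k (j.succAbove i))! = (1 + ∑ i, k (j.succAbove i)) * (∑ i, k (j.succAbove i))! := by
    rw [add_comm, Nat.factorial_succ, add_comm]
  push_cast [h, Nat.factorial_one]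
  rw [mul_div_assoc]
  simp [Function.comp]

/-- Any family satisfying the string equation, dilaton equation and initial
condition `F(2) = 1/24` equals `(1/24) · binom(n+1; k₁,…,kₙ)`. -/
theorem genus_two_pullback_recursion
    (F : (n : ℕ) → (Fin n → ℕ) → ℚ)
    (hstring : ∀ m : ℕ, 1 ≤ m → ∀ k : Fin (m + 1) → ℕ, (∑ i, k i) = m + 2 →
      ∀ j : Fin (m + 1), k j = 0 →
      F (m + 1) k =
        ∑ i ∈ Finset.univ.filter (fun i : Fin m => 0 < k (j.succAbove i)),
          F m (Function.update (k ∘ j.succAbove) i (k (j.succAbove i) - 1)))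
    (hdilaton : ∀ m : ℕ, 1 ≤ m → ∀ k : Fin (m + 1) → ℕ, (∑ i, k i) = m + 2 →
      ∀ j : Fin (m + 1), k j = 1 →
      F (m + 1) k = (m + 2) * F m (k ∘ j.succAbove))
    (hinit : F 1 ![2] = 1 / 24) :
    ∀ n : ℕ, 1 ≤ n → ∀ k : Fin n → ℕ, (∑ i, k i) = n + 1 →
      F n k = (1 / 24) * (Nat.multinomial Finset.univ k : ℚ) := by
  intro n hn
  induction n, hn using Nat.le_induction with
  | base =>
      intro k hk
      have hk0 : k 0 = 2 := by simpa [Fin.sum_univ_one] using hk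
      have hke : k = ![2] := by
        funext i
        fin_cases i
        simpa using hk0
      subst hke
      rw [hinit]
      norm_num [Nat.multinomial, Fin.sum_univ_one]
  | succ m hm IH =>
      intro k hk
      have hex : ∃ j, k j ≤ 1 := by
        by_contra h
        push_neg at h
        have : ∑ i, (2 : ℕ) ≤ ∑ i : Fin (m + 1), k i :=
          Finset.sum_le_sum fun i _ => h i
        simp [Finset.sum_const, Finset.card_univ] at this
        omega
      obtain ⟨j, hj⟩ := hex
      have hsum' : k j + ∑ i, (k ∘ j.succAbove) i = m + 2 := by
        rw [← hk, Fin.sum_univ_succAbove k j]; rfl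
      interval_cases hkj : k j
      · -- string case
        rw [hstring m hm k hk j hkj]
        have hterm : ∀ i ∈ Finset.univ.filter (fun i : Fin m => 0 < k (j.succAbove i)),
            F m (Function.update (k ∘ j.succAbove) i (k (j.succAbove i) - 1))
              = (1 / 24) * (Nat.multinomial univ
                  (Function.update (k ∘ j.succAbove) i ((k ∘ j.succAbove) i - 1)) : ℚ) := by
          intro i hi
          simp only [mem_filter] at hi
          apply IH
          have herase := Finset.add_sum_erase univ (k ∘ j.succAbove) (mem_univ i)
          rw [Finset.erase_eq] at herase
          rw [Finset.sum_update_of_mem (mem_univ i)]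
          have h2 : (k ∘ j.succAbove) i = k (j.succAbove i) := rfl
          omega
        rw [Finset.sum_congr rfl hterm, ← Finset.mul_sum]
        rw [show (Finset.univ.filter (fun i : Fin m => 0 < k (j.succAbove i)))
              = Finset.univ.filter (fun i => 0 < (k ∘ j.succAbove) i) from rfl]
        rw [string_mult m (k ∘ j.succAbove) (by omega)]
        rw [mult_zero_erase m k j hkj]
      · -- dilaton case
        rw [hdilaton m hm k hk j hkj]
        rw [IH (k ∘ j.succAbove) (by omega)]
        rw [mult_one_erase m k j hkj, hk]
        push_cast
        ring
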